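/- Soundness of the linear case (cl_T = ∅) of abstract unification for Clique-Sharing+Freeness: let x be a variable, T a finite set of variables, cl a clique set and sh a sharing set with no clique of cl intersecting T, and let S = ↓cl ∪ sh. Then (S \ S_{{x}∪T}) ∪ (S_{{x}} ⊎ S_T*) ⊆ ↓(rel̄({x} ∪ T, cl) ∪ (cl_{{x}} ⊎ {⋃ sh_T})) ∪ ((sh \ sh_{{x}∪T}) ∪ (sh_{{x}} ⊎ sh_T*)), where ⋃ sh_T is the union of all groups of sh intersecting T. -/
import Mathlib


variable {V : Type*} [DecidableEq V]

/-- `℘⁰(C)`: the set of nonempty subsets of a finite set `C`. -/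
def pow0 (C : Finset V) : Set (Finset V) := {u | u ⊆ C ∧ u ≠ ∅}

/-- Concretization of a clique set: `↓cl = ⋃_{C ∈ cl} ℘⁰(C)`. -/
def conc (cl : Set (Finset V)) : Set (Finset V) := ⋃ C ∈ cl, pow0 C

/-- Binary union: `s₁ ⊎ s₂ = {a ∪ b : a ∈ s₁, b ∈ s₂}`. -/
def bin (s₁ s₂ : Set (Finset V)) : Set (Finset V) :=
  {u | ∃ a ∈ s₁, ∃ b ∈ s₂, u = a ∪ b}

/-- Star union: all unions `⋃ T` over finite nonempty subfamilies `T ⊆ s`. -/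
def starU (s : Set (Finset V)) : Set (Finset V) :=
  {u | ∃ T : Finset (Finset V), T.Nonempty ∧ ↑T ⊆ s ∧ u = T.sup id}

/-- `s_G`: the part of `s` relevant to `G` (groups intersecting `G`). -/
def relG (G : Finset V) (s : Set (Finset V)) : Set (Finset V) :=
  {u ∈ s | u ∩ G ≠ ∅}

/-- `rel̄(S, cl) = {C \ S : C ∈ cl} \ {∅}`. -/
def relbar (S : Finset V) (cl : Set (Finset V)) : Set (Finset V) :=
  {d | (∃ C ∈ cl, d = C \ S) ∧ d ≠ ∅}

/-- `project(G, s) = {u ∩ G : u ∈ s} \ {∅}`. -/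
def sproject (G : Finset V) (s : Set (Finset V)) : Set (Finset V) :=
  {d | (∃ u ∈ s, d = u ∩ G) ∧ d ≠ ∅}

/-- Abstract unification of the Sharing domain for `x = t`, `T` the variables of `t`. -/
def amgu (x : V) (T : Finset V) (s : Set (Finset V)) : Set (Finset V) :=
  (s \ relG ({x} ∪ T) s) ∪ bin (starU (relG {x} s)) (starU (relG T s))

/-- The `extend` function of the Sharing domain. -/
def extendSh (Call : Set (Finset V)) (G : Finset V) (Prime : Set (Finset V)) :
    Set (Finset V) :=
  {u ∈ Call | u ∩ G = ∅} ∪ {u ∈ starU (relG G Call) | u ∩ G ∈ Prime}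

/-- Union of all groups of `s` containing `x`, as a set of variables. -/
def occSet (s : Set (Finset V)) (x : V) : Set V :=
  ⋃ u ∈ {u ∈ s | x ∈ u}, (↑u : Set V)

/-- Soundness of the linear case (cl_T = ∅) of abstract unification for
    Clique-Sharing+Freeness. -/
theorem amgu_linear_sound_empty (x : V) (T : Finset V) (cl sh : Set (Finset V))
    (UT : Finset V)
    (hclT : relG T cl = ∅)
    (hUT : (↑UT : Set V) = ⋃ u ∈ relG T sh, (↑u : Set V)) :
    ((conc cl ∪ sh) \ relG ({x} ∪ T) (conc cl ∪ sh))
      ∪ bin (relG {x} (conc cl ∪ sh)) (starU (relG T (conc cl ∪ sh))) ⊆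
    conc (relbar ({x} ∪ T) cl ∪ bin (relG {x} cl) {UT})
      ∪ ((sh \ relG ({x} ∪ T) sh) ∪ bin (relG {x} sh) (starU (relG T sh))) := by
  -- every group relevant to T in (conc cl ∪ sh) is in sh
  have hTsh : relG T (conc cl ∪ sh) ⊆ relG T sh := by
    rintro v ⟨hv | hv, hvT⟩
    · exfalso
      obtain ⟨C, hsub, hC, -⟩ : ∃ C, v ⊆ C ∧ C ∈ cl ∧ v ≠ ∅ := by
        simpa [conc, pow0, Set.mem_iUnion] using hv
      obtain ⟨y, hy⟩ := Finset.nonempty_iff_ne_empty.mpr hvT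
      rw [Finset.mem_inter] at hy
      have : C ∈ relG T cl :=
        ⟨hC, Finset.ne_empty_of_mem (Finset.mem_inter.mpr ⟨hsub hy.1, hy.2⟩)⟩
      simp [hclT] at this
    · exact ⟨hv, hvT⟩
  have hUTsub : ∀ v ∈ relG T sh, v ⊆ UT := by
    intro v hv w hw
    have : (w : V) ∈ (↑UT : Set V) := by
      rw [hUT]; exact Set.mem_biUnion hv hw
    exact_mod_cast this
  intro u hu
  rcases hu with ⟨hmem, hnr⟩ | ⟨a, ha, b, hb, rfl⟩
  · have huG : u ∩ ({x} ∪ T) = ∅ := by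
      by_contra h
      exact hnr ⟨hmem, h⟩
    rcases hmem with hc | hs
    · -- u comes from a clique
      obtain ⟨C, hsub, hC, hne⟩ : ∃ C, u ⊆ C ∧ C ∈ cl ∧ u ≠ ∅ := by
        simpa [conc, pow0, Set.mem_iUnion] using hc
      left
      refine Set.mem_biUnion (s := relbar ({x} ∪ T) cl ∪ _)
        (Or.inl ⟨⟨C, hC, rfl⟩, ?_⟩) (⟨?_, hne⟩ : u ∈ pow0 _)
      · obtain ⟨y, hy⟩ := Finset.nonempty_iff_ne_empty.mpr hne
        refine Finset.ne_empty_of_mem (a := y) (Finset.mem_sdiff.mpr ⟨hsub hy, ?_⟩)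
        intro hy'
        exact absurd huG (Finset.ne_empty_of_mem (Finset.mem_inter.mpr ⟨hy, hy'⟩))
      · intro y hy
        refine Finset.mem_sdiff.mpr ⟨hsub hy, fun hy' => ?_⟩
        exact absurd huG (Finset.ne_empty_of_mem (Finset.mem_inter.mpr ⟨hy, hy'⟩))
    · exact Or.inr (Or.inl ⟨hs, fun h => hnr ⟨Or.inr hs, h.2⟩⟩)
  · -- binary union case
    obtain ⟨ha', hax⟩ := ha
    obtain ⟨F, hFne, hFsub, rfl⟩ := hb
    have hFsub' : (↑F : Set (Finset V)) ⊆ relG T sh := fun v hv => hTsh (hFsub hv)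
    have hbmem : F.sup id ∈ starU (relG T sh) := ⟨F, hFne, hFsub', rfl⟩
    have hbUT : F.sup id ⊆ UT := by
      refine Finset.sup_le fun v hv => hUTsub v (hFsub' hv)
    have hxa : x ∈ a := by
      obtain ⟨y, hy⟩ := Finset.nonempty_iff_ne_empty.mpr hax
      rw [Finset.mem_inter, Finset.mem_singleton] at hy
      exact hy.2 ▸ hy.1
    rcases ha' with hc | hs
    · -- a comes from a clique containing x
      obtain ⟨C, hsub, hC, hne⟩ : ∃ C, a ⊆ C ∧ C ∈ cl ∧ a ≠ ∅ := by
        simpa [conc, pow0, Set.mem_iUnion] using hc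
      left
      refine Set.mem_biUnion (s := _ ∪ bin (relG {x} cl) {UT})
        (Or.inr ⟨C, ⟨hC, Finset.ne_empty_of_mem
          (Finset.mem_inter.mpr ⟨hsub hxa, Finset.mem_singleton_self x⟩)⟩,
          UT, rfl, rfl⟩) (⟨?_, ?_⟩ : a ∪ F.sup id ∈ pow0 _)
      · exact Finset.union_subset_union hsub hbUT
      · exact Finset.ne_empty_of_mem (Finset.mem_union_left _ hxa)
    · exact Or.inr (Or.inr ⟨a, ⟨hs, hax⟩, F.sup id, hbmem, rfl⟩)
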